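/- Entropy sum-difference inequality: if X and Y are independent G-valued discrete random variables, then H(X+Y) ≤ 3·H(X−Y) − H(X) − H(Y). -/

import Mathlib

open Real
open scoped BigOperators Pointwise Classical

/-- A finitely supported probability space. -/
structure FinProb (Ω : Type*) [Fintype Ω] where
  p : Ω → ℝ
  nonneg : ∀ ω, 0 ≤ p ω
  sum_one : ∑ ω, p ω = 1

/-- Probability that the random variable `X` takes the value `s`. -/
noncomputable def prob {Ω S : Type*} [Fintype Ω] (μ : FinProb Ω) (X : Ω → S) (s : S) : ℝ :=
  ∑ ω, if X ω = s then μ.p ω else 0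

/-- Shannon entropy of a discrete random variable. -/
noncomputable def entropy {Ω S : Type*} [Fintype Ω] (μ : FinProb Ω) (X : Ω → S) : ℝ :=
  ∑ s ∈ Finset.univ.image X, Real.negMulLog (prob μ X s)

/-- Conditional Shannon entropy `H(X|Y) = H(X,Y) - H(Y)`. -/
noncomputable def condEntropy {Ω S T : Type*} [Fintype Ω] (μ : FinProb Ω)
    (X : Ω → S) (Y : Ω → T) : ℝ :=
  entropy μ (fun ω => (X ω, Y ω)) - entropy μ Y

/-- The essential range of a random variable: values attained with positive probability. -/
noncomputable def rangeF {Ω S : Type*} [Fintype Ω] (μ : FinProb Ω) (X : Ω → S) : Finset S :=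
  (Finset.univ.image X).filter (fun s => prob μ X s ≠ 0)

/-- Two random variables (on possibly different spaces) have the same distribution. -/
def IdentDist {Ω Ω' S : Type*} [Fintype Ω] [Fintype Ω'] (μ : FinProb Ω) (X : Ω → S)
    (μ' : FinProb Ω') (Y : Ω' → S) : Prop :=
  ∀ s, prob μ X s = prob μ' Y s

/-- Independence of two random variables. -/
def IndepRV {Ω S T : Type*} [Fintype Ω] (μ : FinProb Ω) (X : Ω → S) (Y : Ω → T) : Prop :=
  ∀ s t, prob μ (fun ω => (X ω, Y ω)) (s, t) = prob μ X s * prob μ Y t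

/-- Joint independence of a finite family of random variables. -/
def IndepFam {Ω ι : Type*} [Fintype Ω] [Fintype ι] {S : ι → Type*}
    (μ : FinProb Ω) (X : ∀ i, Ω → S i) : Prop :=
  ∀ f : ∀ i, S i, prob μ (fun ω i => X i ω) f = ∏ i, prob μ (X i) (f i)

/-- `X` and `Y` are conditionally independent given `W`. -/
def CondIndepGiven {Ω S T U : Type*} [Fintype Ω] (μ : FinProb Ω)
    (X : Ω → S) (Y : Ω → T) (W : Ω → U) : Prop :=
  ∀ s t u, prob μ (fun ω => (X ω, Y ω, W ω)) (s, t, u) * prob μ W u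
    = prob μ (fun ω => (X ω, W ω)) (s, u) * prob μ (fun ω => (Y ω, W ω)) (t, u)

/-- `Y` is determined by `X` (almost surely). -/
def Determines {Ω S T : Type*} [Fintype Ω] (μ : FinProb Ω) (X : Ω → S) (Y : Ω → T) : Prop :=
  ∃ f : S → T, ∀ ω, μ.p ω ≠ 0 → Y ω = f (X ω)

/-- The entropy transport distance between the distributions of `X` and `Y`:
the infimum of `H(Z)` over random variables `Z` (coupled with a copy `X'` of `X`)
such that `X' + Z` is distributed as `Y`. -/
noncomputable def transDist {Ω₁ Ω₂ G : Type*} [Fintype Ω₁] [Fintype Ω₂] [AddCommGroup G]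
    (μ : FinProb Ω₁) (X : Ω₁ → G) (ν : FinProb Ω₂) (Y : Ω₂ → G) : ℝ :=
  sInf {h : ℝ | ∃ (n : ℕ) (μ' : FinProb (Fin n)) (X' Z : Fin n → G),
    IdentDist μ' X' μ X ∧ IdentDist μ' (fun ω => X' ω + Z ω) ν Y ∧ entropy μ' Z = h}

/-- Conditioning a finitely supported probability space on an event `E`
(returning `μ` unchanged if `E` has zero probability). -/
noncomputable def condFinProb {Ω : Type*} [Fintype Ω] (μ : FinProb Ω) (E : Ω → Prop) :
    FinProb Ω :=
  if h : 0 < ∑ ω, if E ω then μ.p ω else 0 then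
    { p := fun ω => if E ω then μ.p ω / (∑ ω', if E ω' then μ.p ω' else 0) else 0
      nonneg := fun ω => by
        split
        · exact div_nonneg (μ.nonneg ω) h.le
        · exact le_refl 0
      sum_one := by
        have h' : ∀ ω, (if E ω then μ.p ω / (∑ ω', if E ω' then μ.p ω' else 0) else 0)
            = (if E ω then μ.p ω else 0) / (∑ ω', if E ω' then μ.p ω' else 0) := by
          intro ω; split <;> simp
        rw [Finset.sum_congr rfl (fun ω _ => h' ω), ← Finset.sum_div, div_self h.ne'] }
  else μ
section Toolbox

open Finset

variable {Ω S T U : Type*} [Fintype Ω]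

lemma prob_nonneg (μ : FinProb Ω) (X : Ω → S) (s : S) : 0 ≤ prob μ X s := by
  refine Finset.sum_nonneg fun ω _ => ?_
  split
  · exact μ.nonneg ω
  · exact le_rfl

lemma prob_eq_zero' (μ : FinProb Ω) {X : Ω → S} {s : S}
    (h : ∀ ω, X ω ≠ s) : prob μ X s = 0 :=
  Finset.sum_eq_zero fun ω _ => if_neg (h ω)

lemma sum_prob (μ : FinProb Ω) (X : Ω → S) {F : Finset S}
    (hF : ∀ ω, X ω ∈ F) : ∑ s ∈ F, prob μ X s = 1 := by
  unfold prob
  rw [Finset.sum_comm, ← μ.sum_one]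
  refine Finset.sum_congr rfl fun ω _ => ?_
  rw [Finset.sum_ite_eq F (X ω) fun _ => μ.p ω, if_pos (hF ω)]

lemma entropy_eq_sum (μ : FinProb Ω) (X : Ω → S) {F : Finset S}
    (hF : ∀ ω, X ω ∈ F) :
    entropy μ X = ∑ s ∈ F, Real.negMulLog (prob μ X s) := by
  refine Finset.sum_subset (Finset.image_subset_iff.2 fun ω _ => hF ω)
    (fun s _ hs => ?_)
  have h0 : prob μ X s = 0 := by
    refine prob_eq_zero' μ fun ω hω => ?_
    exact hs (hω ▸ Finset.mem_image_of_mem X (Finset.mem_univ ω))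
  rw [h0, Real.negMulLog_zero]

lemma entropy_congr {Ω' : Type*} [Fintype Ω'] (μ : FinProb Ω) (μ' : FinProb Ω')
    (X : Ω → S) (X' : Ω' → S) (h : ∀ s, prob μ X s = prob μ' X' s) :
    entropy μ X = entropy μ' X' := by
  classical
  rw [entropy_eq_sum μ X (F := Finset.univ.image X ∪ Finset.univ.image X')
      (fun ω => Finset.mem_union_left _ (Finset.mem_image_of_mem X (Finset.mem_univ ω))),
    entropy_eq_sum μ' X' (F := Finset.univ.image X ∪ Finset.univ.image X')
      (fun ω => Finset.mem_union_right _ (Finset.mem_image_of_mem X' (Finset.mem_univ ω)))]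
  exact Finset.sum_congr rfl fun s _ => by rw [h s]

lemma prob_comp (μ : FinProb Ω) (X : Ω → S) (g : S → T) {F : Finset S}
    (hF : ∀ ω, X ω ∈ F) (t : T) :
    prob μ (fun ω => g (X ω)) t = ∑ s ∈ F, if g s = t then prob μ X s else 0 := by
  have hswap : ∀ s, (if g s = t then prob μ X s else 0)
      = ∑ ω, if X ω = s ∧ g s = t then μ.p ω else 0 := by
    intro s
    by_cases hgs : g s = t
    · simp [hgs, prob]
    · simp [hgs]
  calc prob μ (fun ω => g (X ω)) t = ∑ ω, if g (X ω) = t then μ.p ω else 0 := rfl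
    _ = ∑ ω, ∑ s ∈ F, if X ω = s ∧ g s = t then μ.p ω else 0 := by
        refine Finset.sum_congr rfl fun ω _ => ?_
        rw [Finset.sum_eq_single_of_mem (X ω) (hF ω)
          (fun b _ hb => if_neg fun hc => hb hc.1.symm)]
        simp
    _ = ∑ s ∈ F, ∑ ω, if X ω = s ∧ g s = t then μ.p ω else 0 := Finset.sum_comm
    _ = ∑ s ∈ F, if g s = t then prob μ X s else 0 :=
        Finset.sum_congr rfl fun s _ => (hswap s).symm

lemma prob_cond_congr (μ : FinProb Ω) {X : Ω → S} {X' : Ω → T} {s : S} {s' : T}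
    (h : ∀ ω, X ω = s ↔ X' ω = s') : prob μ X s = prob μ X' s' :=
  Finset.sum_congr rfl fun ω _ => if_congr (h ω) rfl rfl

lemma prob_fst (μ : FinProb Ω) (X : Ω → S) (Y : Ω → T) {F : Finset T}
    (hF : ∀ ω, Y ω ∈ F) (s : S) :
    prob μ X s = ∑ t ∈ F, prob μ (fun ω => (X ω, Y ω)) (s, t) := by
  unfold prob
  rw [Finset.sum_comm]
  refine Finset.sum_congr rfl fun ω _ => ?_
  dsimp only
  refine Eq.symm ((Finset.sum_eq_single_of_mem (Y ω) (hF ω) ?_).trans ?_)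
  · intro b _ hb
    exact if_neg fun hc => hb (congrArg Prod.snd hc).symm
  · simp [Prod.ext_iff]

lemma prob_snd (μ : FinProb Ω) (X : Ω → S) (Y : Ω → T) {F : Finset S}
    (hF : ∀ ω, X ω ∈ F) (t : T) :
    prob μ Y t = ∑ s ∈ F, prob μ (fun ω => (X ω, Y ω)) (s, t) := by
  unfold prob
  rw [Finset.sum_comm]
  refine Finset.sum_congr rfl fun ω _ => ?_
  dsimp only
  refine Eq.symm ((Finset.sum_eq_single_of_mem (X ω) (hF ω) ?_).trans ?_)
  · intro b _ hb
    exact if_neg fun hc => hb (congrArg Prod.fst hc).symm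
  · simp [Prod.ext_iff]

lemma prob_pair_le_fst (μ : FinProb Ω) (X : Ω → S) (Y : Ω → T) (s : S) (t : T) :
    prob μ (fun ω => (X ω, Y ω)) (s, t) ≤ prob μ X s := by
  refine Finset.sum_le_sum fun ω _ => ?_
  dsimp only
  by_cases h : (X ω, Y ω) = (s, t)
  · rw [if_pos h, if_pos (congrArg Prod.fst h)]
  · rw [if_neg h]
    split
    · exact μ.nonneg ω
    · exact le_rfl

lemma prob_pair_le_snd (μ : FinProb Ω) (X : Ω → S) (Y : Ω → T) (s : S) (t : T) :
    prob μ (fun ω => (X ω, Y ω)) (s, t) ≤ prob μ Y t := by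
  refine Finset.sum_le_sum fun ω _ => ?_
  dsimp only
  by_cases h : (X ω, Y ω) = (s, t)
  · rw [if_pos h, if_pos (congrArg Prod.snd h)]
  · rw [if_neg h]
    split
    · exact μ.nonneg ω
    · exact le_rfl

lemma mul_neg_log (x : ℝ) : x * (-Real.log x) = Real.negMulLog x := by
  unfold Real.negMulLog; ring

lemma negMulLog_add_le {a b : ℝ} (ha : 0 ≤ a) (hb : 0 ≤ b) :
    Real.negMulLog (a + b) ≤ Real.negMulLog a + Real.negMulLog b := by
  rcases ha.eq_or_lt with h0 | h0
  · rw [← h0, zero_add, Real.negMulLog_zero, zero_add]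
  rcases hb.eq_or_lt with h1 | h1
  · rw [← h1, add_zero, Real.negMulLog_zero, add_zero]
  have la : Real.log a ≤ Real.log (a + b) := Real.log_le_log h0 (by linarith)
  have lb : Real.log b ≤ Real.log (a + b) := Real.log_le_log h1 (by linarith)
  have ha' := mul_le_mul_of_nonneg_left la ha
  have hb' := mul_le_mul_of_nonneg_left lb hb
  have hsplit : (a + b) * Real.log (a + b)
      = a * Real.log (a + b) + b * Real.log (a + b) := by ring
  simp only [Real.negMulLog, neg_mul]
  linarith

lemma negMulLog_sum_le {ι : Type*} (F : Finset ι) (f : ι → ℝ)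
    (hf : ∀ i ∈ F, 0 ≤ f i) :
    Real.negMulLog (∑ i ∈ F, f i) ≤ ∑ i ∈ F, Real.negMulLog (f i) := by
  classical
  revert hf
  induction F using Finset.cons_induction with
  | empty => intro _; simp
  | cons a s ha ih =>
    intro hf
    rw [Finset.sum_cons, Finset.sum_cons]
    have h1 := negMulLog_add_le (hf a (Finset.mem_cons_self a s))
      (Finset.sum_nonneg fun i hi => hf i (Finset.mem_cons_of_mem hi))
    exact h1.trans (add_le_add le_rfl (ih fun i hi => hf i (Finset.mem_cons_of_mem hi)))

lemma entropy_comp_le (μ : FinProb Ω) (X : Ω → S) (g : S → T) :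
    entropy μ (fun ω => g (X ω)) ≤ entropy μ X := by
  classical
  have himg : Finset.univ.image (fun ω => g (X ω))
      = (Finset.univ.image X).image g := by
    rw [Finset.image_image]; rfl
  unfold entropy
  rw [himg, ← Finset.sum_fiberwise_of_maps_to
    (fun s hs => Finset.mem_image_of_mem g hs)
    (fun s => Real.negMulLog (prob μ X s))]
  refine Finset.sum_le_sum fun t ht => ?_
  rw [prob_comp μ X g (fun ω => Finset.mem_image_of_mem X (Finset.mem_univ ω)) t,
    ← Finset.sum_filter]
  exact negMulLog_sum_le _ _ (fun s _ => prob_nonneg μ X s)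

lemma entropy_comp_eq (μ : FinProb Ω) (X : Ω → S) (g : S → T) (h : T → S)
    (hgh : ∀ ω, h (g (X ω)) = X ω) :
    entropy μ (fun ω => g (X ω)) = entropy μ X := by
  refine le_antisymm (entropy_comp_le μ X g) ?_
  have h2 := entropy_comp_le μ (fun ω => g (X ω)) h
  rwa [show (fun ω => h (g (X ω))) = X from funext hgh] at h2

lemma prob_comp_congr {Ω' : Type*} [Fintype Ω'] (μ : FinProb Ω) (μ' : FinProb Ω')
    (W : Ω → S) (W' : Ω' → S) (h : ∀ s, prob μ W s = prob μ' W' s) (g : S → T) (t : T) :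
    prob μ (fun ω => g (W ω)) t = prob μ' (fun ω => g (W' ω)) t := by
  classical
  rw [prob_comp μ W g (F := Finset.univ.image W ∪ Finset.univ.image W')
      (fun ω => Finset.mem_union_left _ (Finset.mem_image_of_mem W (Finset.mem_univ ω))) t,
    prob_comp μ' W' g (F := Finset.univ.image W ∪ Finset.univ.image W')
      (fun ω => Finset.mem_union_right _ (Finset.mem_image_of_mem W' (Finset.mem_univ ω))) t]
  exact Finset.sum_congr rfl fun s _ => by rw [h s]

lemma gibbs {ι : Type*} (F : Finset ι) (p q : ι → ℝ)
    (hp : ∀ i ∈ F, 0 ≤ p i) (hq : ∀ i ∈ F, 0 ≤ q i)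
    (hpq : ∀ i ∈ F, p i ≠ 0 → q i ≠ 0)
    (hq1 : ∑ i ∈ F, q i ≤ 1) (hp1 : ∑ i ∈ F, p i = 1) :
    ∑ i ∈ F, Real.negMulLog (p i) ≤ ∑ i ∈ F, p i * (-Real.log (q i)) := by
  have key : ∀ i ∈ F, Real.negMulLog (p i) - p i * (-Real.log (q i)) ≤ q i - p i := by
    intro i hi
    rcases (hp i hi).eq_or_lt with h0 | h0
    · rw [← h0]
      simpa using hq i hi
    · have hq0 : 0 < q i := lt_of_le_of_ne (hq i hi) (Ne.symm (hpq i hi h0.ne'))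
      have hlog : Real.log (q i / p i) ≤ q i / p i - 1 :=
        Real.log_le_sub_one_of_pos (div_pos hq0 h0)
      have h2 : p i * Real.log (q i / p i) ≤ q i - p i := by
        have hm := mul_le_mul_of_nonneg_left hlog h0.le
        calc p i * Real.log (q i / p i) ≤ p i * (q i / p i - 1) := hm
          _ = q i - p i := by field_simp
      rw [Real.log_div hq0.ne' h0.ne', mul_sub] at h2
      simp only [Real.negMulLog, neg_mul]
      linarith
  have hsum := Finset.sum_le_sum key
  rw [Finset.sum_sub_distrib, Finset.sum_sub_distrib, hp1] at hsum
  linarith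

lemma entropy_pair_le (μ : FinProb Ω) (X : Ω → S) (Y : Ω → T) :
    entropy μ (fun ω => (X ω, Y ω)) ≤ entropy μ X + entropy μ Y := by
  classical
  have hmem : ∀ ω, (X ω, Y ω) ∈ (Finset.univ.image X) ×ˢ (Finset.univ.image Y) :=
    fun ω => Finset.mem_product.2 ⟨Finset.mem_image_of_mem X (Finset.mem_univ ω),
      Finset.mem_image_of_mem Y (Finset.mem_univ ω)⟩
  have hpq : ∀ z ∈ (Finset.univ.image X) ×ˢ (Finset.univ.image Y),
      prob μ (fun ω => (X ω, Y ω)) z ≠ 0 → prob μ X z.1 * prob μ Y z.2 ≠ 0 := by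
    intro z _ hne
    have h1 : 0 < prob μ (fun ω => (X ω, Y ω)) z :=
      lt_of_le_of_ne (prob_nonneg μ _ z) (Ne.symm hne)
    have hx : 0 < prob μ X z.1 := h1.trans_le (prob_pair_le_fst μ X Y z.1 z.2)
    have hy : 0 < prob μ Y z.2 := h1.trans_le (prob_pair_le_snd μ X Y z.1 z.2)
    exact mul_ne_zero hx.ne' hy.ne'
  have hq1 : ∑ z ∈ (Finset.univ.image X) ×ˢ (Finset.univ.image Y),
      prob μ X z.1 * prob μ Y z.2 ≤ 1 := by
    refine le_of_eq ?_
    rw [Finset.sum_product]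
    calc ∑ s ∈ Finset.univ.image X, ∑ t ∈ Finset.univ.image Y, prob μ X s * prob μ Y t
        = ∑ s ∈ Finset.univ.image X, prob μ X s * ∑ t ∈ Finset.univ.image Y, prob μ Y t :=
          Finset.sum_congr rfl fun s _ => (Finset.mul_sum _ _ _).symm
      _ = 1 := by
          rw [sum_prob μ Y (fun ω => Finset.mem_image_of_mem Y (Finset.mem_univ ω))]
          simp only [mul_one]
          exact sum_prob μ X (fun ω => Finset.mem_image_of_mem X (Finset.mem_univ ω))
  have hgibbs := gibbs ((Finset.univ.image X) ×ˢ (Finset.univ.image Y))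
    (prob μ (fun ω => (X ω, Y ω))) (fun z => prob μ X z.1 * prob μ Y z.2)
    (fun z _ => prob_nonneg μ _ z)
    (fun z _ => mul_nonneg (prob_nonneg μ _ _) (prob_nonneg μ _ _))
    hpq hq1 (sum_prob μ _ hmem)
  rw [entropy_eq_sum μ _ hmem]
  refine hgibbs.trans (le_of_eq ?_)
  have hsplit : ∀ z ∈ (Finset.univ.image X) ×ˢ (Finset.univ.image Y),
      prob μ (fun ω => (X ω, Y ω)) z * (-Real.log (prob μ X z.1 * prob μ Y z.2))
      = prob μ (fun ω => (X ω, Y ω)) z * (-Real.log (prob μ X z.1))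
        + prob μ (fun ω => (X ω, Y ω)) z * (-Real.log (prob μ Y z.2)) := by
    intro z hz
    rcases eq_or_ne (prob μ (fun ω => (X ω, Y ω)) z) 0 with h0 | h0
    · rw [h0]; ring
    · have h1 : 0 < prob μ (fun ω => (X ω, Y ω)) z :=
        lt_of_le_of_ne (prob_nonneg μ _ z) (Ne.symm h0)
      have hx : prob μ X z.1 ≠ 0 := (h1.trans_le (prob_pair_le_fst μ X Y z.1 z.2)).ne'
      have hy : prob μ Y z.2 ≠ 0 := (h1.trans_le (prob_pair_le_snd μ X Y z.1 z.2)).ne'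
      rw [Real.log_mul hx hy]; ring
  rw [Finset.sum_congr rfl hsplit, Finset.sum_add_distrib]
  congr 1
  · rw [Finset.sum_product]
    have h1 : ∀ s, ∑ t ∈ Finset.univ.image Y,
        prob μ (fun ω => (X ω, Y ω)) (s, t) * (-Real.log (prob μ X s))
        = Real.negMulLog (prob μ X s) := by
      intro s
      rw [← Finset.sum_mul,
        ← prob_fst μ X Y (fun ω => Finset.mem_image_of_mem Y (Finset.mem_univ ω)) s,
        mul_neg_log]
    rw [Finset.sum_congr rfl fun s _ => h1 s]
    exact (entropy_eq_sum μ X (fun ω => Finset.mem_image_of_mem X (Finset.mem_univ ω))).symm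
  · rw [Finset.sum_product, Finset.sum_comm]
    have h1 : ∀ t, ∑ s ∈ Finset.univ.image X,
        prob μ (fun ω => (X ω, Y ω)) (s, t) * (-Real.log (prob μ Y t))
        = Real.negMulLog (prob μ Y t) := by
      intro t
      rw [← Finset.sum_mul,
        ← prob_snd μ X Y (fun ω => Finset.mem_image_of_mem X (Finset.mem_univ ω)) t,
        mul_neg_log]
    rw [Finset.sum_congr rfl fun t _ => h1 t]
    exact (entropy_eq_sum μ Y (fun ω => Finset.mem_image_of_mem Y (Finset.mem_univ ω))).symm

lemma entropy_pair_eq_of_indep (μ : FinProb Ω) (X : Ω → S) (Y : Ω → T)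
    (h : IndepRV μ X Y) :
    entropy μ (fun ω => (X ω, Y ω)) = entropy μ X + entropy μ Y := by
  classical
  have hmem : ∀ ω, (X ω, Y ω) ∈ (Finset.univ.image X) ×ˢ (Finset.univ.image Y) :=
    fun ω => Finset.mem_product.2 ⟨Finset.mem_image_of_mem X (Finset.mem_univ ω),
      Finset.mem_image_of_mem Y (Finset.mem_univ ω)⟩
  rw [entropy_eq_sum μ _ hmem, Finset.sum_product]
  have hrow : ∀ s, ∑ t ∈ Finset.univ.image Y,
      Real.negMulLog (prob μ (fun ω => (X ω, Y ω)) (s, t))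
      = Real.negMulLog (prob μ X s)
        + prob μ X s * ∑ t ∈ Finset.univ.image Y, Real.negMulLog (prob μ Y t) := by
    intro s
    have hterm : ∀ t ∈ Finset.univ.image Y,
        Real.negMulLog (prob μ (fun ω => (X ω, Y ω)) (s, t))
        = prob μ Y t * Real.negMulLog (prob μ X s)
          + prob μ X s * Real.negMulLog (prob μ Y t) := by
      intro t _
      rw [h s t, Real.negMulLog_mul]
    rw [Finset.sum_congr rfl hterm, Finset.sum_add_distrib, ← Finset.sum_mul,
      sum_prob μ Y (fun ω => Finset.mem_image_of_mem Y (Finset.mem_univ ω)), one_mul,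
      ← Finset.mul_sum]
  rw [Finset.sum_congr rfl fun s _ => hrow s, Finset.sum_add_distrib, ← Finset.sum_mul,
    sum_prob μ X (fun ω => Finset.mem_image_of_mem X (Finset.mem_univ ω)), one_mul]
  unfold entropy
  rfl

lemma indep_comp_left (μ : FinProb Ω) {X : Ω → S} {Y : Ω → T}
    (h : IndepRV μ X Y) (f : S → U) :
    IndepRV μ (fun ω => f (X ω)) Y := by
  classical
  intro u t
  have hL : prob μ (fun ω => (f (X ω), Y ω)) (u, t)
      = ∑ s ∈ Finset.univ.image X,
          if f s = u then prob μ (fun ω => (X ω, Y ω)) (s, t) else 0 := by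
    refine (prob_comp μ (fun ω => (X ω, Y ω)) (fun z => (f z.1, z.2))
      (F := (Finset.univ.image X) ×ˢ (insert t (Finset.univ.image Y)))
      (fun ω => Finset.mem_product.2 ⟨Finset.mem_image_of_mem X (Finset.mem_univ ω),
        Finset.mem_insert_of_mem (Finset.mem_image_of_mem Y (Finset.mem_univ ω))⟩)
      (u, t)).trans ?_
    rw [Finset.sum_product]
    refine Finset.sum_congr rfl fun s _ => ?_
    dsimp only
    refine (Finset.sum_eq_single_of_mem t (Finset.mem_insert_self t _) ?_).trans ?_
    · intro b _ hb
      exact if_neg fun hc => hb (congrArg Prod.snd hc)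
    · simp [Prod.ext_iff]
  rw [hL]
  have hsplit : ∀ s ∈ Finset.univ.image X,
      (if f s = u then prob μ (fun ω => (X ω, Y ω)) (s, t) else 0)
      = (if f s = u then prob μ X s else 0) * prob μ Y t := by
    intro s _
    by_cases hfs : f s = u <;> simp [hfs, h s t]
  rw [Finset.sum_congr rfl hsplit, ← Finset.sum_mul]
  congr 1
  exact (prob_comp μ X f (fun ω => Finset.mem_image_of_mem X (Finset.mem_univ ω)) u).symm

end Toolbox
section Submod

open Finset

lemma sum_triple_abc {α β γ M : Type*} [AddCommMonoid M]
    (FA : Finset α) (FB : Finset β) (FC : Finset γ) (f : α × β × γ → M) :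
    ∑ z ∈ FA ×ˢ FB ×ˢ FC, f z = ∑ a ∈ FA, ∑ b ∈ FB, ∑ c ∈ FC, f (a, b, c) :=
  calc ∑ z ∈ FA ×ˢ FB ×ˢ FC, f z
      = ∑ a ∈ FA, ∑ y ∈ FB ×ˢ FC, f (a, y) := Finset.sum_product _ _ _
    _ = ∑ a ∈ FA, ∑ b ∈ FB, ∑ c ∈ FC, f (a, b, c) :=
        Finset.sum_congr rfl fun _ _ => Finset.sum_product _ _ _

lemma sum_triple_acb {α β γ M : Type*} [AddCommMonoid M]
    (FA : Finset α) (FB : Finset β) (FC : Finset γ) (f : α × β × γ → M) :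
    ∑ z ∈ FA ×ˢ FB ×ˢ FC, f z = ∑ a ∈ FA, ∑ c ∈ FC, ∑ b ∈ FB, f (a, b, c) :=
  (sum_triple_abc FA FB FC f).trans
    (Finset.sum_congr rfl fun a _ => Finset.sum_comm)

lemma sum_triple_cab {α β γ M : Type*} [AddCommMonoid M]
    (FA : Finset α) (FB : Finset β) (FC : Finset γ) (f : α × β × γ → M) :
    ∑ z ∈ FA ×ˢ FB ×ˢ FC, f z = ∑ c ∈ FC, ∑ a ∈ FA, ∑ b ∈ FB, f (a, b, c) :=
  (sum_triple_acb FA FB FC f).trans Finset.sum_comm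

lemma sum_triple_bca {α β γ M : Type*} [AddCommMonoid M]
    (FA : Finset α) (FB : Finset β) (FC : Finset γ) (f : α × β × γ → M) :
    ∑ z ∈ FA ×ˢ FB ×ˢ FC, f z = ∑ b ∈ FB, ∑ c ∈ FC, ∑ a ∈ FA, f (a, b, c) := by
  rw [sum_triple_abc FA FB FC f, Finset.sum_comm]
  exact Finset.sum_congr rfl fun b _ => Finset.sum_comm

variable {Ω : Type*} [Fintype Ω] {α β γ : Type*}

lemma prob_marg_fst_thd (μ : FinProb Ω) (A : Ω → α) (B : Ω → β) (C : Ω → γ)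
    {FB : Finset β} (hFB : ∀ ω, B ω ∈ FB) (a : α) (c : γ) :
    prob μ (fun ω => (A ω, C ω)) (a, c)
      = ∑ b ∈ FB, prob μ (fun ω => (A ω, B ω, C ω)) (a, b, c) := by
  unfold prob
  rw [Finset.sum_comm]
  refine Finset.sum_congr rfl fun ω _ => ?_
  dsimp only
  refine Eq.symm ((Finset.sum_eq_single_of_mem (B ω) (hFB ω) ?_).trans ?_)
  · intro b _ hb
    exact if_neg fun hc => hb (congrArg (fun z => z.2.1) hc).symm
  · simp [Prod.ext_iff]

lemma prob_marg_snd_thd (μ : FinProb Ω) (A : Ω → α) (B : Ω → β) (C : Ω → γ)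
    {FA : Finset α} (hFA : ∀ ω, A ω ∈ FA) (b : β) (c : γ) :
    prob μ (fun ω => (B ω, C ω)) (b, c)
      = ∑ a ∈ FA, prob μ (fun ω => (A ω, B ω, C ω)) (a, b, c) := by
  unfold prob
  rw [Finset.sum_comm]
  refine Finset.sum_congr rfl fun ω _ => ?_
  dsimp only
  refine Eq.symm ((Finset.sum_eq_single_of_mem (A ω) (hFA ω) ?_).trans ?_)
  · intro a _ ha
    exact if_neg fun hc => ha (congrArg (fun z => z.1) hc).symm
  · simp [Prod.ext_iff]

lemma prob_thd (μ : FinProb Ω) (A : Ω → α) (B : Ω → β) (C : Ω → γ)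
    {FA : Finset α} {FB : Finset β} (hFA : ∀ ω, A ω ∈ FA) (hFB : ∀ ω, B ω ∈ FB) (c : γ) :
    prob μ C c = ∑ a ∈ FA, ∑ b ∈ FB, prob μ (fun ω => (A ω, B ω, C ω)) (a, b, c) := by
  rw [prob_snd μ A C hFA c]
  exact Finset.sum_congr rfl fun a _ => prob_marg_fst_thd μ A B C hFB a c

lemma entropy_submodular (μ : FinProb Ω) (A : Ω → α) (B : Ω → β) (C : Ω → γ) :
    entropy μ (fun ω => (A ω, B ω, C ω)) + entropy μ C
      ≤ entropy μ (fun ω => (A ω, C ω)) + entropy μ (fun ω => (B ω, C ω)) := by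
  classical
  set FA := Finset.univ.image A with hFAdef
  set FB := Finset.univ.image B with hFBdef
  set FC := Finset.univ.image C with hFCdef
  have hAmem : ∀ ω, A ω ∈ FA := fun ω => Finset.mem_image_of_mem A (Finset.mem_univ ω)
  have hBmem : ∀ ω, B ω ∈ FB := fun ω => Finset.mem_image_of_mem B (Finset.mem_univ ω)
  have hCmem : ∀ ω, C ω ∈ FC := fun ω => Finset.mem_image_of_mem C (Finset.mem_univ ω)
  have hmem : ∀ ω, (A ω, B ω, C ω) ∈ FA ×ˢ FB ×ˢ FC := fun ω =>
    Finset.mem_product.2 ⟨hAmem ω, Finset.mem_product.2 ⟨hBmem ω, hCmem ω⟩⟩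
  have hmemAC : ∀ ω, (A ω, C ω) ∈ FA ×ˢ FC := fun ω =>
    Finset.mem_product.2 ⟨hAmem ω, hCmem ω⟩
  have hmemBC : ∀ ω, (B ω, C ω) ∈ FB ×ˢ FC := fun ω =>
    Finset.mem_product.2 ⟨hBmem ω, hCmem ω⟩
  have mAC : ∀ a c, prob μ (fun ω => (A ω, C ω)) (a, c)
      = ∑ b ∈ FB, prob μ (fun ω => (A ω, B ω, C ω)) (a, b, c) :=
    fun a c => prob_marg_fst_thd μ A B C hBmem a c
  have mBC : ∀ b c, prob μ (fun ω => (B ω, C ω)) (b, c)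
      = ∑ a ∈ FA, prob μ (fun ω => (A ω, B ω, C ω)) (a, b, c) :=
    fun b c => prob_marg_snd_thd μ A B C hAmem b c
  have mC : ∀ c, prob μ C c
      = ∑ a ∈ FA, ∑ b ∈ FB, prob μ (fun ω => (A ω, B ω, C ω)) (a, b, c) :=
    fun c => prob_thd μ A B C hAmem hBmem c
  have mCA : ∀ c, prob μ C c = ∑ a ∈ FA, prob μ (fun ω => (A ω, C ω)) (a, c) :=
    fun c => prob_snd μ A C hAmem c
  have mCB : ∀ c, prob μ C c = ∑ b ∈ FB, prob μ (fun ω => (B ω, C ω)) (b, c) :=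
    fun c => prob_snd μ B C hBmem c
  have hTnn : ∀ z, (0:ℝ) ≤ prob μ (fun ω => (A ω, B ω, C ω)) z := fun z => prob_nonneg μ _ z
  have hle_AC : ∀ a b c, b ∈ FB → prob μ (fun ω => (A ω, B ω, C ω)) (a, b, c)
      ≤ prob μ (fun ω => (A ω, C ω)) (a, c) := by
    intro a b c hb
    rw [mAC a c]
    exact Finset.single_le_sum
      (f := fun b => prob μ (fun ω => (A ω, B ω, C ω)) (a, b, c)) (fun b' _ => hTnn _) hb
  have hle_BC : ∀ a b c, a ∈ FA → prob μ (fun ω => (A ω, B ω, C ω)) (a, b, c)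
      ≤ prob μ (fun ω => (B ω, C ω)) (b, c) := by
    intro a b c ha
    rw [mBC b c]
    exact Finset.single_le_sum
      (f := fun a => prob μ (fun ω => (A ω, B ω, C ω)) (a, b, c)) (fun a' _ => hTnn _) ha
  have hle_C : ∀ a c, a ∈ FA → prob μ (fun ω => (A ω, C ω)) (a, c) ≤ prob μ C c := by
    intro a c ha
    rw [mCA c]
    exact Finset.single_le_sum
      (f := fun a => prob μ (fun ω => (A ω, C ω)) (a, c)) (fun a' _ => prob_nonneg μ _ _) ha
  have hpos : ∀ z ∈ FA ×ˢ FB ×ˢ FC, prob μ (fun ω => (A ω, B ω, C ω)) z ≠ 0 →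
      0 < prob μ (fun ω => (A ω, C ω)) (z.1, z.2.2)
      ∧ 0 < prob μ (fun ω => (B ω, C ω)) (z.2.1, z.2.2) ∧ 0 < prob μ C z.2.2 := by
    intro z hz hne
    obtain ⟨ha, hbc⟩ := Finset.mem_product.1 hz
    obtain ⟨hb, hc⟩ := Finset.mem_product.1 hbc
    have hT : 0 < prob μ (fun ω => (A ω, B ω, C ω)) z :=
      lt_of_le_of_ne (hTnn z) (Ne.symm hne)
    have h1 : 0 < prob μ (fun ω => (A ω, C ω)) (z.1, z.2.2) :=
      hT.trans_le (hle_AC z.1 z.2.1 z.2.2 hb)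
    have h2 : 0 < prob μ (fun ω => (B ω, C ω)) (z.2.1, z.2.2) :=
      hT.trans_le (hle_BC z.1 z.2.1 z.2.2 ha)
    exact ⟨h1, h2, h1.trans_le (hle_C z.1 z.2.2 ha)⟩
  have hpq : ∀ z ∈ FA ×ˢ FB ×ˢ FC, prob μ (fun ω => (A ω, B ω, C ω)) z ≠ 0 →
      prob μ (fun ω => (A ω, C ω)) (z.1, z.2.2) * prob μ (fun ω => (B ω, C ω)) (z.2.1, z.2.2)
        / prob μ C z.2.2 ≠ 0 := by
    intro z hz hne
    obtain ⟨h1, h2, h3⟩ := hpos z hz hne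
    exact (div_pos (mul_pos h1 h2) h3).ne'
  have hq1 : ∑ z ∈ FA ×ˢ FB ×ˢ FC,
      prob μ (fun ω => (A ω, C ω)) (z.1, z.2.2) * prob μ (fun ω => (B ω, C ω)) (z.2.1, z.2.2)
        / prob μ C z.2.2 ≤ 1 := by
    rw [sum_triple_cab]
    have hterm : ∀ c ∈ FC, ∑ a ∈ FA, ∑ b ∈ FB,
        prob μ (fun ω => (A ω, C ω)) (a, c) * prob μ (fun ω => (B ω, C ω)) (b, c)
          / prob μ C c ≤ prob μ C c := by
      intro c _
      have e1 : ∀ a, ∑ b ∈ FB,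
          prob μ (fun ω => (A ω, C ω)) (a, c) * prob μ (fun ω => (B ω, C ω)) (b, c)
            / prob μ C c
          = (∑ b ∈ FB,
              prob μ (fun ω => (A ω, C ω)) (a, c) * prob μ (fun ω => (B ω, C ω)) (b, c))
            / prob μ C c := fun a => (Finset.sum_div _ _ _).symm
      have heq : ∑ a ∈ FA, ∑ b ∈ FB,
          prob μ (fun ω => (A ω, C ω)) (a, c) * prob μ (fun ω => (B ω, C ω)) (b, c)
            / prob μ C c
          = prob μ C c * prob μ C c / prob μ C c := by
        rw [Finset.sum_congr rfl fun a _ => e1 a, ← Finset.sum_div, ← Finset.sum_mul_sum,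
          ← mCA c, ← mCB c]
      rw [heq]
      rcases eq_or_ne (prob μ C c) 0 with h0 | h0
      · rw [h0]; simp
      · rw [mul_div_assoc, div_self h0, mul_one]
    calc ∑ c ∈ FC, ∑ a ∈ FA, ∑ b ∈ FB, _ ≤ ∑ c ∈ FC, prob μ C c :=
          Finset.sum_le_sum hterm
      _ = 1 := sum_prob μ C hCmem
  have key := gibbs (FA ×ˢ FB ×ˢ FC) (prob μ (fun ω => (A ω, B ω, C ω)))
    (fun z => prob μ (fun ω => (A ω, C ω)) (z.1, z.2.2)
      * prob μ (fun ω => (B ω, C ω)) (z.2.1, z.2.2) / prob μ C z.2.2)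
    (fun z _ => hTnn z)
    (fun z _ => div_nonneg (mul_nonneg (prob_nonneg μ _ _) (prob_nonneg μ _ _))
      (prob_nonneg μ _ _))
    hpq hq1 (sum_prob μ _ hmem)
  have hterm2 : ∀ z ∈ FA ×ˢ FB ×ˢ FC,
      prob μ (fun ω => (A ω, B ω, C ω)) z *
        (-Real.log (prob μ (fun ω => (A ω, C ω)) (z.1, z.2.2)
          * prob μ (fun ω => (B ω, C ω)) (z.2.1, z.2.2) / prob μ C z.2.2))
      = prob μ (fun ω => (A ω, B ω, C ω)) z *
          (-Real.log (prob μ (fun ω => (A ω, C ω)) (z.1, z.2.2)))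
        + prob μ (fun ω => (A ω, B ω, C ω)) z *
          (-Real.log (prob μ (fun ω => (B ω, C ω)) (z.2.1, z.2.2)))
        + prob μ (fun ω => (A ω, B ω, C ω)) z * Real.log (prob μ C z.2.2) := by
    intro z hz
    rcases eq_or_ne (prob μ (fun ω => (A ω, B ω, C ω)) z) 0 with h0 | h0
    · rw [h0]; ring
    · obtain ⟨h1, h2, h3⟩ := hpos z hz h0
      rw [Real.log_div (mul_ne_zero h1.ne' h2.ne') h3.ne', Real.log_mul h1.ne' h2.ne']
      ring
  have hS1 : ∑ z ∈ FA ×ˢ FB ×ˢ FC, prob μ (fun ω => (A ω, B ω, C ω)) z *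
      (-Real.log (prob μ (fun ω => (A ω, C ω)) (z.1, z.2.2)))
      = entropy μ (fun ω => (A ω, C ω)) := by
    rw [sum_triple_acb]
    have hrow : ∀ a, ∑ c ∈ FC, ∑ b ∈ FB,
        prob μ (fun ω => (A ω, B ω, C ω)) (a, b, c) *
          (-Real.log (prob μ (fun ω => (A ω, C ω)) (a, c)))
        = ∑ c ∈ FC, Real.negMulLog (prob μ (fun ω => (A ω, C ω)) (a, c)) := by
      intro a
      refine Finset.sum_congr rfl fun c _ => ?_
      rw [← Finset.sum_mul, ← mAC a c, mul_neg_log]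
    rw [Finset.sum_congr rfl fun a _ => hrow a, entropy_eq_sum μ _ hmemAC,
      Finset.sum_product]
  have hS2 : ∑ z ∈ FA ×ˢ FB ×ˢ FC, prob μ (fun ω => (A ω, B ω, C ω)) z *
      (-Real.log (prob μ (fun ω => (B ω, C ω)) (z.2.1, z.2.2)))
      = entropy μ (fun ω => (B ω, C ω)) := by
    rw [sum_triple_bca]
    have hrow : ∀ b, ∑ c ∈ FC, ∑ a ∈ FA,
        prob μ (fun ω => (A ω, B ω, C ω)) (a, b, c) *
          (-Real.log (prob μ (fun ω => (B ω, C ω)) (b, c)))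
        = ∑ c ∈ FC, Real.negMulLog (prob μ (fun ω => (B ω, C ω)) (b, c)) := by
      intro b
      refine Finset.sum_congr rfl fun c _ => ?_
      rw [← Finset.sum_mul, ← mBC b c, mul_neg_log]
    rw [Finset.sum_congr rfl fun b _ => hrow b, entropy_eq_sum μ _ hmemBC,
      Finset.sum_product]
  have hS3 : ∑ z ∈ FA ×ˢ FB ×ˢ FC, prob μ (fun ω => (A ω, B ω, C ω)) z *
      Real.log (prob μ C z.2.2)
      = - entropy μ C := by
    rw [sum_triple_cab]
    have hrow : ∀ c, ∑ a ∈ FA, ∑ b ∈ FB,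
        prob μ (fun ω => (A ω, B ω, C ω)) (a, b, c) * Real.log (prob μ C c)
        = - Real.negMulLog (prob μ C c) := by
      intro c
      have e1 : ∀ a, ∑ b ∈ FB,
          prob μ (fun ω => (A ω, B ω, C ω)) (a, b, c) * Real.log (prob μ C c)
          = (∑ b ∈ FB, prob μ (fun ω => (A ω, B ω, C ω)) (a, b, c)) * Real.log (prob μ C c) :=
        fun a => (Finset.sum_mul _ _ _).symm
      rw [Finset.sum_congr rfl fun a _ => e1 a, ← Finset.sum_mul, ← mC c]
      unfold Real.negMulLog
      ring
    rw [Finset.sum_congr rfl fun c _ => hrow c, entropy_eq_sum μ C hCmem]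
    rw [Finset.sum_neg_distrib]
  have hid : ∑ z ∈ FA ×ˢ FB ×ˢ FC, prob μ (fun ω => (A ω, B ω, C ω)) z *
      (-Real.log (prob μ (fun ω => (A ω, C ω)) (z.1, z.2.2)
        * prob μ (fun ω => (B ω, C ω)) (z.2.1, z.2.2) / prob μ C z.2.2))
      = entropy μ (fun ω => (A ω, C ω)) + entropy μ (fun ω => (B ω, C ω))
        - entropy μ C := by
    rw [Finset.sum_congr rfl hterm2, Finset.sum_add_distrib, Finset.sum_add_distrib,
      hS1, hS2, hS3]
    ring
  rw [hid] at key
  rw [← entropy_eq_sum μ _ hmem] at key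
  linarith

end Submod
section ProdSpace

open Finset

noncomputable def FinProb.prod {Ω₁ Ω₂ : Type*} [Fintype Ω₁] [Fintype Ω₂]
    (μ : FinProb Ω₁) (ν : FinProb Ω₂) : FinProb (Ω₁ × Ω₂) where
  p := fun ω => μ.p ω.1 * ν.p ω.2
  nonneg := fun ω => mul_nonneg (μ.nonneg _) (ν.nonneg _)
  sum_one := by
    rw [Fintype.sum_prod_type]
    have h1 : ∀ ω₁, ∑ ω₂, μ.p ω₁ * ν.p ω₂ = μ.p ω₁ := by
      intro ω₁
      rw [← Finset.mul_sum, ν.sum_one, mul_one]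
    rw [Finset.sum_congr rfl fun ω₁ _ => h1 ω₁, μ.sum_one]

variable {Ω₁ Ω₂ S T : Type*} [Fintype Ω₁] [Fintype Ω₂] (μ : FinProb Ω₁) (ν : FinProb Ω₂)

lemma ite_prod_split {P Q : Prop} [Decidable P] [Decidable Q] (a b : ℝ) :
    (if P ∧ Q then a * b else 0) = (if P then a else 0) * (if Q then b else 0) := by
  by_cases hP : P <;> by_cases hQ : Q <;> simp [hP, hQ]

lemma prob_prod_fst (Z : Ω₁ → S) (s : S) :
    prob (μ.prod ν) (fun ω => Z ω.1) s = prob μ Z s := by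
  unfold prob FinProb.prod
  rw [Fintype.sum_prod_type]
  refine Finset.sum_congr rfl fun ω₁ _ => ?_
  by_cases h : Z ω₁ = s <;> simp [h, ← Finset.mul_sum, ν.sum_one]

lemma prob_prod_snd (Z : Ω₂ → S) (s : S) :
    prob (μ.prod ν) (fun ω => Z ω.2) s = prob ν Z s := by
  unfold prob FinProb.prod
  rw [Fintype.sum_prod_type, Finset.sum_comm]
  refine Finset.sum_congr rfl fun ω₂ _ => ?_
  by_cases h : Z ω₂ = s <;> simp [h, ← Finset.sum_mul, μ.sum_one]

lemma entropy_prod_fst (Z : Ω₁ → S) :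
    entropy (μ.prod ν) (fun ω => Z ω.1) = entropy μ Z :=
  entropy_congr _ _ _ _ (fun s => prob_prod_fst μ ν Z s)

lemma entropy_prod_snd (Z : Ω₂ → S) :
    entropy (μ.prod ν) (fun ω => Z ω.2) = entropy ν Z :=
  entropy_congr _ _ _ _ (fun s => prob_prod_snd μ ν Z s)

lemma prob_prod_pair (U : Ω₁ → S) (V : Ω₂ → T) (s : S) (t : T) :
    prob (μ.prod ν) (fun ω => (U ω.1, V ω.2)) (s, t) = prob μ U s * prob ν V t := by
  unfold prob FinProb.prod
  rw [Fintype.sum_prod_type, Finset.sum_mul_sum]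
  refine Finset.sum_congr rfl fun ω₁ _ => Finset.sum_congr rfl fun ω₂ _ => ?_
  by_cases h1 : U ω₁ = s <;> by_cases h2 : V ω₂ = t <;> simp [h1, h2, Prod.ext_iff]

lemma indep_fst_snd (U : Ω₁ → S) (V : Ω₂ → T) :
    IndepRV (μ.prod ν) (fun ω => U ω.1) (fun ω => V ω.2) := by
  intro s t
  show prob (μ.prod ν) (fun ω => (U ω.1, V ω.2)) (s, t) = _
  rw [prob_prod_pair μ ν U V s t, prob_prod_fst μ ν U s, prob_prod_snd μ ν V t]

lemma indep_snd_fst (U : Ω₁ → S) (V : Ω₂ → T) :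
    IndepRV (μ.prod ν) (fun ω => V ω.2) (fun ω => U ω.1) := by
  intro t s
  have hL : prob (μ.prod ν) (fun ω => (V ω.2, U ω.1)) (t, s)
      = prob μ U s * prob ν V t := by
    unfold prob FinProb.prod
    rw [Fintype.sum_prod_type, Finset.sum_mul_sum]
    refine Finset.sum_congr rfl fun ω₁ _ => Finset.sum_congr rfl fun ω₂ _ => ?_
    by_cases h1 : U ω₁ = s <;> by_cases h2 : V ω₂ = t <;> simp [h1, h2, Prod.ext_iff]
  show prob (μ.prod ν) (fun ω => (V ω.2, U ω.1)) (t, s) = _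
  rw [hL, prob_prod_fst μ ν U s, prob_prod_snd μ ν V t]
  ring

end ProdSpace
section MainProof

open Finset

variable {G Ω : Type*} [AddCommGroup G] [Fintype Ω]

lemma indep_mix1 (μ : FinProb Ω) (X Y : Ω → G) (hindep : IndepRV μ X Y) :
    IndepRV (μ.prod μ) (fun ω => (X ω.1, Y ω.2)) (fun ω => Y ω.1) := by
  intro z u
  obtain ⟨s, t⟩ := z
  have hL : prob (μ.prod μ) (fun ω => ((X ω.1, Y ω.2), Y ω.1)) ((s, t), u)
      = prob μ (fun ω => (X ω, Y ω)) (s, u) * prob μ Y t := by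
    unfold prob FinProb.prod
    rw [Fintype.sum_prod_type, Finset.sum_mul_sum]
    refine Finset.sum_congr rfl fun ω₁ _ => Finset.sum_congr rfl fun ω₂ _ => ?_
    by_cases h1 : X ω₁ = s <;> by_cases h2 : Y ω₁ = u <;> by_cases h3 : Y ω₂ = t <;>
      simp [h1, h2, h3, Prod.ext_iff]
  show prob (μ.prod μ) (fun ω => ((X ω.1, Y ω.2), Y ω.1)) ((s, t), u) = _
  rw [hL, hindep s u, prob_prod_pair μ μ X Y s t, prob_prod_fst μ μ Y u]
  ring

lemma indep_mix2 (μ : FinProb Ω) (X Y : Ω → G) (hindep : IndepRV μ X Y) :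
    IndepRV (μ.prod μ) (fun ω => (Y ω.1, Y ω.2)) (fun ω => X ω.1) := by
  intro z s
  obtain ⟨u, t⟩ := z
  have hL : prob (μ.prod μ) (fun ω => ((Y ω.1, Y ω.2), X ω.1)) ((u, t), s)
      = prob μ (fun ω => (X ω, Y ω)) (s, u) * prob μ Y t := by
    unfold prob FinProb.prod
    rw [Fintype.sum_prod_type, Finset.sum_mul_sum]
    refine Finset.sum_congr rfl fun ω₁ _ => Finset.sum_congr rfl fun ω₂ _ => ?_
    by_cases h1 : X ω₁ = s <;> by_cases h2 : Y ω₁ = u <;> by_cases h3 : Y ω₂ = t <;>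
      simp [h1, h2, h3, Prod.ext_iff]
  show prob (μ.prod μ) (fun ω => ((Y ω.1, Y ω.2), X ω.1)) ((u, t), s) = _
  rw [hL, hindep s u, prob_prod_pair μ μ Y Y u t, prob_prod_fst μ μ X s]
  ring

lemma indep_mix3 (μ : FinProb Ω) (X Y : Ω → G) (hindep : IndepRV μ X Y) :
    IndepRV (μ.prod μ) (fun ω => X ω.1) (fun ω => (Y ω.1, Y ω.2)) := by
  intro s z
  obtain ⟨u, t⟩ := z
  have hL : prob (μ.prod μ) (fun ω => (X ω.1, Y ω.1, Y ω.2)) (s, u, t)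
      = prob μ (fun ω => (X ω, Y ω)) (s, u) * prob μ Y t := by
    unfold prob FinProb.prod
    rw [Fintype.sum_prod_type, Finset.sum_mul_sum]
    refine Finset.sum_congr rfl fun ω₁ _ => Finset.sum_congr rfl fun ω₂ _ => ?_
    by_cases h1 : X ω₁ = s <;> by_cases h2 : Y ω₁ = u <;> by_cases h3 : Y ω₂ = t <;>
      simp [h1, h2, h3, Prod.ext_iff]
  show prob (μ.prod μ) (fun ω => (X ω.1, Y ω.1, Y ω.2)) (s, u, t) = _
  rw [hL, hindep s u, prob_prod_pair μ μ Y Y u t, prob_prod_fst μ μ X s]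
  ring

end MainProof
/-- entropy sum-difference inequality: for independent `X, Y`,
`H(X+Y) ≤ 3·H(X−Y) − H(X) − H(Y)`. -/
theorem entropy_sum_le_three_mul_entropy_diff {G Ω : Type*} [AddCommGroup G] [Fintype Ω]
    (μ : FinProb Ω) (X Y : Ω → G) (hindep : IndepRV μ X Y) :
    entropy μ (fun ω => X ω + Y ω) ≤
      3 * entropy μ (fun ω => X ω - Y ω) - entropy μ X - entropy μ Y := by
  classical
  set ν := μ.prod μ with hν
  -- distribution transfers
  have hA : entropy ν (fun ω => X ω.1 + Y ω.1) = entropy μ (fun ω => X ω + Y ω) :=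
    entropy_prod_fst μ μ (fun ω => X ω + Y ω)
  have hX' : entropy ν (fun ω => X ω.1) = entropy μ X := entropy_prod_fst μ μ X
  have hY1 : entropy ν (fun ω => Y ω.1) = entropy μ Y := entropy_prod_fst μ μ Y
  have hY2 : entropy ν (fun ω => Y ω.2) = entropy μ Y := entropy_prod_snd μ μ Y
  have hpairdist : ∀ z : G × G, prob ν (fun ω => (X ω.1, Y ω.2)) z
      = prob μ (fun ω => (X ω, Y ω)) z := by
    intro z
    obtain ⟨s, t⟩ := z
    rw [prob_prod_pair μ μ X Y s t, hindep s t]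
  have hP : entropy ν (fun ω => X ω.1 - Y ω.2) = entropy μ (fun ω => X ω - Y ω) :=
    entropy_congr _ _ _ _ (fun d => prob_comp_congr ν μ (fun ω => (X ω.1, Y ω.2))
      (fun ω => (X ω, Y ω)) hpairdist (fun p => p.1 - p.2) d)
  have hP' : entropy ν (fun ω => Y ω.1 - X ω.1) = entropy μ (fun ω => X ω - Y ω) := by
    have h1 : entropy ν (fun ω => Y ω.1 - X ω.1) = entropy μ (fun ω => Y ω - X ω) :=
      entropy_prod_fst μ μ (fun ω => Y ω - X ω)
    have h2 : (fun ω : Ω => Y ω - X ω) = (fun ω => - (X ω - Y ω)) := funext fun ω => by abel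
    rw [h1, h2]
    exact entropy_comp_eq μ (fun ω => X ω - Y ω) (fun v => -v) (fun v => -v)
      (fun ω => by simp)
  -- independences
  have i1 : IndepRV ν (fun ω => X ω.1 + Y ω.1) (fun ω => Y ω.2) :=
    indep_fst_snd μ μ (fun ω => X ω + Y ω) Y
  have i2 : IndepRV ν (fun ω => X ω.1 - Y ω.2) (fun ω => Y ω.1) :=
    indep_comp_left ν (indep_mix1 μ X Y hindep) (fun p => p.1 - p.2)
  have i3 : IndepRV ν (fun ω => Y ω.1 - Y ω.2) (fun ω => X ω.1) :=
    indep_comp_left ν (indep_mix2 μ X Y hindep) (fun p => p.1 - p.2)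
  have i4 : IndepRV ν (fun ω => X ω.1) (fun ω => (Y ω.1, Y ω.2)) := indep_mix3 μ X Y hindep
  have i6 : IndepRV ν (fun ω => Y ω.2) (fun ω => Y ω.1) := indep_snd_fst μ μ Y Y
  -- value of the triple entropy H(X', Y1, Y2)
  have h27 : entropy ν (fun ω => (X ω.1, Y ω.1, Y ω.2))
      = entropy ν (fun ω => X ω.1) + (entropy ν (fun ω => Y ω.1) + entropy ν (fun ω => Y ω.2)) := by
    have a1 : entropy ν (fun ω => (X ω.1, Y ω.1, Y ω.2))
        = entropy ν (fun ω => X ω.1) + entropy ν (fun ω => (Y ω.1, Y ω.2)) :=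
      entropy_pair_eq_of_indep ν (fun ω => X ω.1) (fun ω => (Y ω.1, Y ω.2)) i4
    have a2 : entropy ν (fun ω => (Y ω.1, Y ω.2))
        = entropy ν (fun ω => Y ω.1) + entropy ν (fun ω => Y ω.2) :=
      entropy_pair_eq_of_indep ν (fun ω => Y ω.1) (fun ω => Y ω.2) (indep_fst_snd μ μ Y Y)
    rw [a1, a2]
  -- Step 1 : H(X'+Y1) ≤ H(X'+Y1-Y2)
  have h11 : entropy ν (fun ω => (X ω.1 + Y ω.1, Y ω.2))
      = entropy ν (fun ω => X ω.1 + Y ω.1) + entropy ν (fun ω => Y ω.2) :=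
    entropy_pair_eq_of_indep ν (fun ω => X ω.1 + Y ω.1) (fun ω => Y ω.2) i1
  have h12 : entropy ν (fun ω => (X ω.1 + Y ω.1 - Y ω.2, Y ω.2))
      = entropy ν (fun ω => (X ω.1 + Y ω.1, Y ω.2)) :=
    entropy_comp_eq ν (fun ω => (X ω.1 + Y ω.1, Y ω.2)) (fun p => (p.1 - p.2, p.2))
      (fun p => (p.1 + p.2, p.2)) (fun ω => by simp)
  have h13 : entropy ν (fun ω => (X ω.1 + Y ω.1 - Y ω.2, Y ω.2))
      ≤ entropy ν (fun ω => X ω.1 + Y ω.1 - Y ω.2) + entropy ν (fun ω => Y ω.2) :=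
    entropy_pair_le ν (fun ω => X ω.1 + Y ω.1 - Y ω.2) (fun ω => Y ω.2)
  -- Step 2 : H(X'+Y1-Y2) ≤ H(X'-Y2) + H(Y1-Y2) - H(Y2)
  have h21 : entropy ν (fun ω => (X ω.1 - Y ω.2, Y ω.1 - Y ω.2, X ω.1 + Y ω.1 - Y ω.2))
        + entropy ν (fun ω => X ω.1 + Y ω.1 - Y ω.2)
      ≤ entropy ν (fun ω => (X ω.1 - Y ω.2, X ω.1 + Y ω.1 - Y ω.2))
        + entropy ν (fun ω => (Y ω.1 - Y ω.2, X ω.1 + Y ω.1 - Y ω.2)) :=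
    entropy_submodular ν (fun ω => X ω.1 - Y ω.2) (fun ω => Y ω.1 - Y ω.2)
      (fun ω => X ω.1 + Y ω.1 - Y ω.2)
  have h22 : entropy ν (fun ω => (X ω.1 - Y ω.2, X ω.1 + Y ω.1 - Y ω.2))
      = entropy ν (fun ω => (X ω.1 - Y ω.2, Y ω.1)) := by
    have e : (fun ω : Ω × Ω => (X ω.1 - Y ω.2, X ω.1 + Y ω.1 - Y ω.2))
        = (fun ω => (X ω.1 - Y ω.2, (X ω.1 - Y ω.2) + Y ω.1)) := by
      funext ω
      simp only [Prod.mk.injEq]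
      exact ⟨trivial, by abel⟩
    rw [e]
    exact entropy_comp_eq ν (fun ω => (X ω.1 - Y ω.2, Y ω.1)) (fun p => (p.1, p.1 + p.2))
      (fun p => (p.1, p.2 - p.1)) (fun ω => by simp)
  have h23 : entropy ν (fun ω => (X ω.1 - Y ω.2, Y ω.1))
      = entropy ν (fun ω => X ω.1 - Y ω.2) + entropy ν (fun ω => Y ω.1) :=
    entropy_pair_eq_of_indep ν (fun ω => X ω.1 - Y ω.2) (fun ω => Y ω.1) i2
  have h24 : entropy ν (fun ω => (Y ω.1 - Y ω.2, X ω.1 + Y ω.1 - Y ω.2))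
      = entropy ν (fun ω => (Y ω.1 - Y ω.2, X ω.1)) := by
    have e : (fun ω : Ω × Ω => (Y ω.1 - Y ω.2, X ω.1 + Y ω.1 - Y ω.2))
        = (fun ω => (Y ω.1 - Y ω.2, (Y ω.1 - Y ω.2) + X ω.1)) := by
      funext ω
      simp only [Prod.mk.injEq]
      exact ⟨trivial, by abel⟩
    rw [e]
    exact entropy_comp_eq ν (fun ω => (Y ω.1 - Y ω.2, X ω.1)) (fun p => (p.1, p.1 + p.2))
      (fun p => (p.1, p.2 - p.1)) (fun ω => by simp)
  have h25 : entropy ν (fun ω => (Y ω.1 - Y ω.2, X ω.1))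
      = entropy ν (fun ω => Y ω.1 - Y ω.2) + entropy ν (fun ω => X ω.1) :=
    entropy_pair_eq_of_indep ν (fun ω => Y ω.1 - Y ω.2) (fun ω => X ω.1) i3
  have h26 : entropy ν (fun ω => (X ω.1, Y ω.1, Y ω.2))
      ≤ entropy ν (fun ω => (X ω.1 - Y ω.2, Y ω.1 - Y ω.2, X ω.1 + Y ω.1 - Y ω.2)) := by
    refine le_trans (le_of_eq (congrArg (entropy ν) (funext fun ω => ?_)))
      (entropy_comp_le ν (fun ω => (X ω.1 - Y ω.2, Y ω.1 - Y ω.2, X ω.1 + Y ω.1 - Y ω.2))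
        (fun p => (p.2.2 - p.2.1, p.2.2 - p.1, p.2.2 - p.1 - p.2.1)))
    show (X ω.1, Y ω.1, Y ω.2) = _
    dsimp only
    simp only [Prod.mk.injEq]
    refine ⟨by abel, by abel, by abel⟩
  -- Step 3 : H(Y1-Y2) ≤ H(Y1-X') + H(X'-Y2) - H(X')
  have h31 : entropy ν (fun ω => (Y ω.1 - X ω.1, Y ω.2, Y ω.1 - Y ω.2))
        + entropy ν (fun ω => Y ω.1 - Y ω.2)
      ≤ entropy ν (fun ω => (Y ω.1 - X ω.1, Y ω.1 - Y ω.2))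
        + entropy ν (fun ω => (Y ω.2, Y ω.1 - Y ω.2)) :=
    entropy_submodular ν (fun ω => Y ω.1 - X ω.1) (fun ω => Y ω.2)
      (fun ω => Y ω.1 - Y ω.2)
  have h32 : entropy ν (fun ω => (Y ω.1 - X ω.1, Y ω.1 - Y ω.2))
      = entropy ν (fun ω => (Y ω.1 - X ω.1, X ω.1 - Y ω.2)) := by
    have e : (fun ω : Ω × Ω => (Y ω.1 - X ω.1, Y ω.1 - Y ω.2))
        = (fun ω => (Y ω.1 - X ω.1, (Y ω.1 - X ω.1) + (X ω.1 - Y ω.2))) := by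
      funext ω
      simp only [Prod.mk.injEq]
      exact ⟨trivial, by abel⟩
    rw [e]
    exact entropy_comp_eq ν (fun ω => (Y ω.1 - X ω.1, X ω.1 - Y ω.2))
      (fun p => (p.1, p.1 + p.2)) (fun p => (p.1, p.2 - p.1)) (fun ω => by simp)
  have h33 : entropy ν (fun ω => (Y ω.1 - X ω.1, X ω.1 - Y ω.2))
      ≤ entropy ν (fun ω => Y ω.1 - X ω.1) + entropy ν (fun ω => X ω.1 - Y ω.2) :=
    entropy_pair_le ν (fun ω => Y ω.1 - X ω.1) (fun ω => X ω.1 - Y ω.2)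
  have h34 : entropy ν (fun ω => (Y ω.2, Y ω.1 - Y ω.2))
      = entropy ν (fun ω => (Y ω.2, Y ω.1)) :=
    entropy_comp_eq ν (fun ω => (Y ω.2, Y ω.1)) (fun p => (p.1, p.2 - p.1))
      (fun p => (p.1, p.2 + p.1)) (fun ω => by simp)
  have h35 : entropy ν (fun ω => (Y ω.2, Y ω.1))
      = entropy ν (fun ω => Y ω.2) + entropy ν (fun ω => Y ω.1) :=
    entropy_pair_eq_of_indep ν (fun ω => Y ω.2) (fun ω => Y ω.1) i6
  have h36 : entropy ν (fun ω => (X ω.1, Y ω.1, Y ω.2))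
      ≤ entropy ν (fun ω => (Y ω.1 - X ω.1, Y ω.2, Y ω.1 - Y ω.2)) := by
    refine le_trans (le_of_eq (congrArg (entropy ν) (funext fun ω => ?_)))
      (entropy_comp_le ν (fun ω => (Y ω.1 - X ω.1, Y ω.2, Y ω.1 - Y ω.2))
        (fun p => (p.2.2 + p.2.1 - p.1, p.2.2 + p.2.1, p.2.1)))
    show (X ω.1, Y ω.1, Y ω.2) = _
    dsimp only
    simp only [Prod.mk.injEq]
    refine ⟨by abel, by abel, trivial⟩
  linarith
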